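/- arXiv:2309.15085 — 2 statements merged into one kernel-verified Lean document; each statement's English description precedes it below -/
import Mathlib

section
/- Let q ≥ 2, N ≥ 2, g ≥ 1, k ≥ 2 and Z ≥ 2 be integers, and let θ_1, …, θ_{2g} be real numbers satisfying the Artin-type bound. Then |∑_{m=1}^{Z} q^{-(2k-1)m/2} m^{-1} ∑_{l=1}^{2g} e(mθ_l)| ≤ (N-1)·( 1/(q-1) + (1.5 + log Z - log 2)/q^k ). -/
open Finset

/-- `e θ = exp(2πiθ)`. -/
noncomputable def e (θ : ℝ) : ℂ := Complex.exp (2 * Real.pi * Complex.I * θ)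

/-- The Artin-type bound: for every `m ≥ 1`,
`|∑_{l=1}^{2g} e(mθ_l)| ≤ (N-1)(q^m+1)q^{-m/2}`. -/
def ArtinBound (q N g : ℕ) (θ : ℕ → ℝ) : Prop :=
  ∀ m : ℕ, 1 ≤ m →
    ‖∑ l ∈ Finset.range (2 * g), e ((m : ℝ) * θ l)‖ ≤
      ((N : ℝ) - 1) * ((q : ℝ) ^ m + 1) * (q : ℝ) ^ (-(m : ℝ) / 2)

lemma harmonic_aux (Z : ℕ) (hZ : 2 ≤ Z) :
    ∑ m ∈ Finset.Icc 1 Z, (m : ℝ)⁻¹ ≤ 1.5 + Real.log Z - Real.log 2 := by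
  induction Z with
  | zero => omega
  | succ n ih =>
    rcases Nat.lt_or_ge n 2 with h | h
    · interval_cases n
      · omega
      · rw [show (1:ℕ)+1 = 2 by rfl, show Finset.Icc 1 2 = {1, 2} by rfl]
        norm_num
    · have hn0 : (0:ℝ) < n := by positivity
      have hstep : ((n:ℝ)+1)⁻¹ ≤ Real.log (n+1) - Real.log n := by
        have hx : (0:ℝ) < (n:ℝ)/((n:ℝ)+1) := by positivity
        have := Real.log_le_sub_one_of_pos hx
        rw [Real.log_div (by positivity) (by positivity)] at this
        have h1 : (n:ℝ)/((n:ℝ)+1) - 1 = -((n:ℝ)+1)⁻¹ := by field_simp; ring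
        linarith [this, h1.le]
      rw [Finset.sum_Icc_succ_top (by omega)]
      have hlog : Real.log n ≤ Real.log (n+1) := by
        apply Real.log_le_log (by positivity); linarith
      have := ih h
      push_cast
      push_cast at this hstep
      linarith

lemma geom_aux (q : ℕ) (hq : 2 ≤ q) (Z : ℕ) :
    ∑ m ∈ Finset.Icc 1 Z, ((q:ℝ)⁻¹) ^ m ≤ 1 / ((q:ℝ) - 1) := by
  have hq1 : (1:ℝ) < q := by exact_mod_cast hq
  have hx0 : (0:ℝ) < (q:ℝ)⁻¹ := by positivity
  have hx1 : (q:ℝ)⁻¹ < 1 := by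
    rw [inv_lt_one_iff₀]; right; exact hq1
  set x : ℝ := (q:ℝ)⁻¹ with hxdef
  have h1 : ∑ m ∈ Finset.Icc 1 Z, x ^ m = x * ∑ i ∈ Finset.range Z, x ^ i := by
    rw [show Finset.Icc 1 Z = Finset.Ico 1 (Z+1) by rfl, Finset.sum_Ico_eq_sum_range]
    rw [Finset.mul_sum]
    exact Finset.sum_congr rfl fun i _ => by rw [pow_add, pow_one]
  have h2 : ∑ i ∈ Finset.range Z, x ^ i ≤ (1 - x)⁻¹ := by
    rw [geom_sum_eq (by linarith : x ≠ 1)]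
    have h1x : (0:ℝ) < 1 - x := by linarith
    have hkey : (x ^ Z - 1) / (x - 1) = (1 - x ^ Z) * (1 - x)⁻¹ := by
      rw [← div_eq_mul_inv, div_eq_div_iff (sub_ne_zero.mpr (by linarith : x ≠ 1))
        (sub_ne_zero.mpr (by linarith : (1:ℝ) ≠ x))]
      ring
    rw [hkey]
    have hxZ : (0:ℝ) ≤ x ^ Z := by positivity
    calc (1 - x ^ Z) * (1 - x)⁻¹ ≤ 1 * (1 - x)⁻¹ := by
          apply mul_le_mul_of_nonneg_right (by linarith) (by positivity)
      _ = (1 - x)⁻¹ := one_mul _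
  have h3 : x * (1 - x)⁻¹ = 1 / ((q:ℝ) - 1) := by
    rw [hxdef]
    field_simp
  calc ∑ m ∈ Finset.Icc 1 Z, x ^ m = x * ∑ i ∈ Finset.range Z, x ^ i := h1
    _ ≤ x * (1 - x)⁻¹ := by
        apply mul_le_mul_of_nonneg_left h2 hx0.le
    _ = 1 / ((q:ℝ) - 1) := h3

theorem statement0 (q N g k Z : ℕ) (hq : 2 ≤ q) (hN : 2 ≤ N) (hg : 1 ≤ g)
    (hk : 2 ≤ k) (hZ : 2 ≤ Z) (θ : ℕ → ℝ) (hA : ArtinBound q N g θ) :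
    ‖∑ m ∈ Finset.Icc 1 Z,
        (((q : ℝ) ^ (-(2 * (k : ℝ) - 1) * (m : ℝ) / 2) * (m : ℝ)⁻¹ : ℝ) : ℂ) *
          ∑ l ∈ Finset.range (2 * g), e ((m : ℝ) * θ l)‖
      ≤ ((N : ℝ) - 1) *
          (1 / ((q : ℝ) - 1) + (1.5 + Real.log Z - Real.log 2) / (q : ℝ) ^ k) := by
  have hq1 : (1:ℝ) < q := by exact_mod_cast hq
  have hq0 : (0:ℝ) < q := by linarith
  have hN1 : (1:ℝ) ≤ N := one_le_two.trans (by exact_mod_cast hN : (2:ℝ) ≤ N)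
  have hN0 : (0:ℝ) ≤ (N:ℝ) - 1 := by linarith
  -- per-term bound
  have key : ∀ m ∈ Finset.Icc 1 Z,
      ‖(((q : ℝ) ^ (-(2 * (k : ℝ) - 1) * (m : ℝ) / 2) * (m : ℝ)⁻¹ : ℝ) : ℂ) *
          ∑ l ∈ Finset.range (2 * g), e ((m : ℝ) * θ l)‖
        ≤ ((N:ℝ) - 1) * (((q:ℝ)⁻¹) ^ m + ((q:ℝ) ^ k)⁻¹ * (m:ℝ)⁻¹) := by
    intro m hm
    rw [Finset.mem_Icc] at hm
    have hm1 : 1 ≤ m := hm.1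
    have hm0 : (0:ℝ) < m := by exact_mod_cast hm1
    have hc0 : (0:ℝ) ≤ (q : ℝ) ^ (-(2 * (k : ℝ) - 1) * (m : ℝ) / 2) * (m : ℝ)⁻¹ := by
      positivity
    rw [norm_mul, Complex.norm_of_nonneg hc0]
    have hS := hA m hm1
    calc (q : ℝ) ^ (-(2 * (k : ℝ) - 1) * (m : ℝ) / 2) * (m : ℝ)⁻¹ *
          ‖∑ l ∈ Finset.range (2 * g), e ((m : ℝ) * θ l)‖
        ≤ (q : ℝ) ^ (-(2 * (k : ℝ) - 1) * (m : ℝ) / 2) * (m : ℝ)⁻¹ *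
          (((N : ℝ) - 1) * ((q : ℝ) ^ m + 1) * (q : ℝ) ^ (-(m : ℝ) / 2)) := by
          apply mul_le_mul_of_nonneg_left hS hc0
      _ = ((N:ℝ) - 1) * (((q:ℝ) ^ (-((k:ℝ) - 1) * m) + (q:ℝ) ^ (-(k:ℝ) * m)) * (m:ℝ)⁻¹) := by
          rw [mul_comm ((q : ℝ) ^ (-(2 * (k : ℝ) - 1) * (m : ℝ) / 2)) ((m:ℝ)⁻¹)]
          have e1 : (q : ℝ) ^ (-(2 * (k : ℝ) - 1) * (m : ℝ) / 2) * (q : ℝ) ^ (-(m : ℝ) / 2)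
              = (q:ℝ) ^ (-(k:ℝ) * m) := by
            rw [← Real.rpow_add hq0]; ring_nf
          have e2 : (q:ℝ) ^ (-(k:ℝ) * m) * ((q:ℝ) ^ m) = (q:ℝ) ^ (-((k:ℝ) - 1) * m) := by
            rw [← Real.rpow_natCast (q:ℝ) m, ← Real.rpow_add hq0]; ring_nf
          calc (m:ℝ)⁻¹ * (q : ℝ) ^ (-(2 * (k : ℝ) - 1) * (m : ℝ) / 2) *
                (((N : ℝ) - 1) * ((q : ℝ) ^ m + 1) * (q : ℝ) ^ (-(m : ℝ) / 2))
              = ((N:ℝ) - 1) * (((q : ℝ) ^ (-(2 * (k : ℝ) - 1) * (m : ℝ) / 2) * (q : ℝ) ^ (-(m : ℝ) / 2) * ((q : ℝ) ^ m)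
                + (q : ℝ) ^ (-(2 * (k : ℝ) - 1) * (m : ℝ) / 2) * (q : ℝ) ^ (-(m : ℝ) / 2)) * (m:ℝ)⁻¹) := by ring
            _ = _ := by rw [e1, e2]
      _ ≤ ((N:ℝ) - 1) * (((q:ℝ)⁻¹) ^ m + ((q:ℝ) ^ k)⁻¹ * (m:ℝ)⁻¹) := by
          apply mul_le_mul_of_nonneg_left _ hN0
          have b1 : (q:ℝ) ^ (-((k:ℝ) - 1) * m) ≤ ((q:ℝ)⁻¹) ^ m := by
            rw [← Real.rpow_natCast ((q:ℝ)⁻¹) m, ← Real.rpow_neg_one (q:ℝ),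
              ← Real.rpow_mul hq0.le]
            apply Real.rpow_le_rpow_of_exponent_le hq1.le
            have hk1 : (1:ℝ) ≤ (k:ℝ) - 1 := by
              have : (2:ℝ) ≤ k := by exact_mod_cast hk
              linarith
            have hm0' : (1:ℝ) ≤ (m:ℝ) := by exact_mod_cast hm1
            nlinarith
          have b2 : (q:ℝ) ^ (-(k:ℝ) * m) ≤ ((q:ℝ) ^ k)⁻¹ := by
            rw [← Real.rpow_natCast (q:ℝ) k, ← Real.rpow_neg hq0.le]
            apply Real.rpow_le_rpow_of_exponent_le hq1.le
            have hm0' : (1:ℝ) ≤ (m:ℝ) := by exact_mod_cast hm1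
            have hk0 : (0:ℝ) ≤ (k:ℝ) := by positivity
            nlinarith
          have hminv : (0:ℝ) ≤ (m:ℝ)⁻¹ := by positivity
          have hminv1 : (m:ℝ)⁻¹ ≤ 1 := by
            rw [inv_le_one_iff₀]; right; exact_mod_cast hm1
          have hb1' : (q:ℝ) ^ (-((k:ℝ) - 1) * m) * (m:ℝ)⁻¹ ≤ ((q:ℝ)⁻¹) ^ m := by
            calc (q:ℝ) ^ (-((k:ℝ) - 1) * m) * (m:ℝ)⁻¹ ≤ ((q:ℝ)⁻¹) ^ m * 1 := by
                  apply mul_le_mul b1 hminv1 hminv (by positivity)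
              _ = ((q:ℝ)⁻¹) ^ m := by ring
          have hb2' : (q:ℝ) ^ (-(k:ℝ) * m) * (m:ℝ)⁻¹ ≤ ((q:ℝ) ^ k)⁻¹ * (m:ℝ)⁻¹ :=
            mul_le_mul_of_nonneg_right b2 hminv
          calc ((q:ℝ) ^ (-((k:ℝ) - 1) * m) + (q:ℝ) ^ (-(k:ℝ) * m)) * (m:ℝ)⁻¹
              = (q:ℝ) ^ (-((k:ℝ) - 1) * m) * (m:ℝ)⁻¹ + (q:ℝ) ^ (-(k:ℝ) * m) * (m:ℝ)⁻¹ := by ring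
            _ ≤ ((q:ℝ)⁻¹) ^ m + ((q:ℝ) ^ k)⁻¹ * (m:ℝ)⁻¹ := add_le_add hb1' hb2'
  calc ‖∑ m ∈ Finset.Icc 1 Z,
        (((q : ℝ) ^ (-(2 * (k : ℝ) - 1) * (m : ℝ) / 2) * (m : ℝ)⁻¹ : ℝ) : ℂ) *
          ∑ l ∈ Finset.range (2 * g), e ((m : ℝ) * θ l)‖
      ≤ ∑ m ∈ Finset.Icc 1 Z,
          ‖(((q : ℝ) ^ (-(2 * (k : ℝ) - 1) * (m : ℝ) / 2) * (m : ℝ)⁻¹ : ℝ) : ℂ) *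
          ∑ l ∈ Finset.range (2 * g), e ((m : ℝ) * θ l)‖ := norm_sum_le _ _
    _ ≤ ∑ m ∈ Finset.Icc 1 Z, ((N:ℝ) - 1) * (((q:ℝ)⁻¹) ^ m + ((q:ℝ) ^ k)⁻¹ * (m:ℝ)⁻¹) :=
        Finset.sum_le_sum key
    _ = ((N:ℝ) - 1) * ((∑ m ∈ Finset.Icc 1 Z, ((q:ℝ)⁻¹) ^ m)
          + ((q:ℝ) ^ k)⁻¹ * ∑ m ∈ Finset.Icc 1 Z, (m:ℝ)⁻¹) := by
        rw [← Finset.mul_sum, Finset.sum_add_distrib, ← Finset.mul_sum]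
    _ ≤ ((N : ℝ) - 1) *
          (1 / ((q : ℝ) - 1) + (1.5 + Real.log Z - Real.log 2) / (q : ℝ) ^ k) := by
        apply mul_le_mul_of_nonneg_left _ hN0
        have g1 := geom_aux q hq Z
        have g2 := harmonic_aux Z hZ
        have hqk : (0:ℝ) < (q:ℝ) ^ k := by positivity
        have : ((q:ℝ) ^ k)⁻¹ * ∑ m ∈ Finset.Icc 1 Z, (m:ℝ)⁻¹
            ≤ (1.5 + Real.log Z - Real.log 2) / (q : ℝ) ^ k := by
          rw [div_eq_inv_mul]
          apply mul_le_mul_of_nonneg_left g2 (by positivity)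
        linarith
end

section
/- There exist absolute constants κ > 0, c₁ > 0 and c₂ > 0 such that: for all integers q ≥ 2, N ≥ 2, g ≥ 2, k ≥ 2 and all real numbers θ_1, …, θ_{2g} satisfying the Artin-type bound, if log g > κ log(Nq) then | log( ∏_{l=1}^{2g} |1 - q^{-(2k-1)/2} e(θ_l)| / ((1-q^{-k})(1-q^{1-k})) ) | ≤ c₁N/√q + c₂ N (log log g)/q^k. -/
open Finset

lemma e_abs (θ : ℝ) : ‖e θ‖ = 1 := by
  simp [e, Complex.norm_exp]

lemma e_pow (θ : ℝ) (n : ℕ) : (e θ) ^ n = e ((n:ℝ) * θ) := by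
  rw [e, e, ← Complex.exp_nat_mul]; congr 1; push_cast; ring

lemma hasSum_log_aux {x : ℝ} (hx : 0 < x) (hx1 : x < 1) :
    HasSum (fun m : ℕ => x ^ m / m) (-Real.log (1 - x)) := by
  have h1 := Real.hasSum_pow_div_log_of_abs_lt_one (x := x) (by rw [abs_of_pos hx]; exact hx1)
  rw [← hasSum_nat_add_iff' 1]
  simpa using h1

lemma neg_log_le {t : ℝ} (ht : 0 < t) (ht2 : t ≤ 1/2) : -Real.log (1 - t) ≤ 2 * t := by
  have h1t : 0 < 1 - t := by linarith
  have h2 : (1 - t)⁻¹ ≤ 1 + 2 * t := by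
    rw [inv_eq_one_div, div_le_iff₀ h1t]; nlinarith
  calc -Real.log (1 - t) = Real.log (1 - t)⁻¹ := (Real.log_inv _).symm
    _ ≤ (1 - t)⁻¹ - 1 := Real.log_le_sub_one_of_pos (inv_pos.mpr h1t)
    _ ≤ 2 * t := by linarith

set_option maxHeartbeats 1000000 in
theorem statement3 :
    ∃ κ c₁ c₂ : ℝ, 0 < κ ∧ 0 < c₁ ∧ 0 < c₂ ∧
      ∀ (q N g k : ℕ) (θ : ℕ → ℝ), 2 ≤ q → 2 ≤ N → 2 ≤ g → 2 ≤ k →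
        ArtinBound q N g θ →
        Real.log g > κ * Real.log (N * q) →
        |Real.log ((∏ l ∈ Finset.range (2 * g),
              ‖1 - (((q : ℝ) ^ (-(2 * (k : ℝ) - 1) / 2) : ℝ) : ℂ) * e (θ l)‖) /
            ((1 - (q : ℝ) ^ (-(k : ℝ))) * (1 - (q : ℝ) ^ (1 - (k : ℝ)))))|
          ≤ c₁ * N / Real.sqrt q + c₂ * N * Real.log (Real.log g) / (q : ℝ) ^ k := by
  refine ⟨1, 8, 1, one_pos, by norm_num, one_pos, ?_⟩
  intro q N g k θ hq hN hg hk hA hlog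
  set Q : ℝ := (q : ℝ) with hQdef
  set K : ℝ := (k : ℝ) with hKdef
  have hQ2 : (2:ℝ) ≤ Q := by rw [hQdef]; exact_mod_cast hq
  have hQ0 : (0:ℝ) < Q := by linarith
  have hQ1 : (1:ℝ) < Q := by linarith
  have hK2 : (2:ℝ) ≤ K := by rw [hKdef]; exact_mod_cast hk
  have hN2 : (2:ℝ) ≤ (N:ℝ) := by exact_mod_cast hN
  set r : ℝ := Q ^ (-(2 * K - 1) / 2) with hrdef
  set x : ℝ := Q ^ (1 - K) with hxdef
  set y : ℝ := Q ^ (-K) with hydef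
  have hr0 : 0 < r := Real.rpow_pos_of_pos hQ0 _
  have hx0 : 0 < x := Real.rpow_pos_of_pos hQ0 _
  have hy0 : 0 < y := Real.rpow_pos_of_pos hQ0 _
  have hr1 : r < 1 := Real.rpow_lt_one_of_one_lt_of_neg hQ1 (by nlinarith)
  have hmono : ∀ a b : ℝ, a ≤ b → Q ^ a ≤ Q ^ b := fun a b hab =>
    Real.rpow_le_rpow_left_iff hQ1 |>.mpr hab
  have hxhalf : x ≤ 1/2 := by
    have h1 : x ≤ Q ^ (-1 : ℝ) := hmono _ _ (by linarith)
    have h2 : Q ^ (-1 : ℝ) = Q⁻¹ := Real.rpow_neg_one Q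
    have h3 : Q⁻¹ ≤ 2⁻¹ := by
      rw [inv_le_inv₀ hQ0 two_pos]; exact hQ2
    rw [h2] at h1; rw [show (1:ℝ)/2 = 2⁻¹ by norm_num]; linarith
  have hyx : y ≤ x := hmono _ _ (by linarith)
  have hyhalf : y ≤ 1/2 := le_trans hyx hxhalf
  have hx1 : x < 1 := by linarith
  have hy1 : y < 1 := by linarith
  -- the complex numbers
  have hwabs : ∀ l, ‖(r:ℂ) * e (θ l)‖ = r := by
    intro l; rw [norm_mul, e_abs, Complex.norm_of_nonneg hr0.le, mul_one]
  have hwnorm : ∀ l, ‖(r:ℂ) * e (θ l)‖ < 1 := by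
    intro l; rw [hwabs]; exact hr1
  have hfac_pos : ∀ l, 0 < ‖1 - (r:ℂ) * e (θ l)‖ := by
    intro l
    have h1 : ‖(1:ℂ)‖ - ‖(r:ℂ) * e (θ l)‖ ≤ ‖1 - (r:ℂ) * e (θ l)‖ := norm_sub_norm_le _ _
    rw [norm_one] at h1
    have h2 := hwnorm l
    linarith
  -- key power identity
  have hpow : ∀ (a : ℝ) (n : ℕ), (Q ^ a) ^ n = Q ^ (a * n) := fun a n => by
    rw [← Real.rpow_natCast (Q ^ a) n, ← Real.rpow_mul hQ0.le]
  have hkey : ∀ n : ℕ, r ^ n * ((Q ^ n + 1) * Q ^ (-(n:ℝ)/2)) = x ^ n + y ^ n := by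
    intro n
    have e2 : (Q:ℝ) ^ n = Q ^ ((n:ℝ)) := (Real.rpow_natCast Q n).symm
    rw [hrdef, hxdef, hydef, hpow, hpow, hpow, e2, add_mul, one_mul,
      ← Real.rpow_add hQ0, mul_add, ← Real.rpow_add hQ0, ← Real.rpow_add hQ0]
    congr 1 <;> · congr 1; ring
  -- series for each factor
  have hl : ∀ l, HasSum (fun m : ℕ => ((r:ℂ) * e (θ l)) ^ m / m)
      (-(Complex.log (1 - (r:ℂ) * e (θ l)))) := fun l =>
    Complex.hasSum_taylorSeries_neg_log (hwnorm l)
  have hsum : HasSum (fun m : ℕ => ∑ l ∈ range (2*g), ((r:ℂ) * e (θ l)) ^ m / m)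
      (∑ l ∈ range (2*g), -(Complex.log (1 - (r:ℂ) * e (θ l)))) :=
    hasSum_sum (fun l _ => hl l)
  -- real comparison series
  have hX := hasSum_log_aux hx0 hx1
  have hY := hasSum_log_aux hy0 hy1
  have hb : HasSum (fun m : ℕ => ((N:ℝ) - 1) * (x ^ m / m + y ^ m / m))
      (((N:ℝ) - 1) * (-Real.log (1 - x) + -Real.log (1 - y))) :=
    (hX.add hY).mul_left _
  -- the bound on each term
  have hbd : ∀ m : ℕ, ‖∑ l ∈ range (2*g), ((r:ℂ) * e (θ l)) ^ m / m‖ ≤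
      ((N:ℝ) - 1) * (x ^ m / m + y ^ m / m) := by
    intro m
    rcases Nat.eq_zero_or_pos m with hm | hm
    · subst hm; simp
    · have hterm : ∀ l, ((r:ℂ) * e (θ l)) ^ m / m = ((r:ℝ)^m : ℝ) * e ((m:ℝ) * θ l) / m := by
        intro l; rw [mul_pow, e_pow]; push_cast; ring
      calc ‖∑ l ∈ range (2*g), ((r:ℂ) * e (θ l)) ^ m / m‖
          = ‖((r:ℝ)^m : ℝ) * (∑ l ∈ range (2*g), e ((m:ℝ) * θ l)) / m‖ := by
            rw [Finset.sum_congr rfl fun l _ => hterm l, ← Finset.sum_div, ← Finset.mul_sum]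
        _ = r ^ m * ‖∑ l ∈ range (2*g), e ((m:ℝ) * θ l)‖ / m := by
            rw [norm_div, norm_mul]
            simp [abs_of_pos hr0, abs_of_nonneg (pow_nonneg hr0.le m), Nat.cast_pos.mpr hm,
              le_of_lt (Nat.cast_pos.mpr hm : (0:ℝ) < m)]
        _ ≤ r ^ m * (((N : ℝ) - 1) * ((q : ℝ) ^ m + 1) * (q : ℝ) ^ (-(m : ℝ) / 2)) / m := by
            gcongr
            exact hA m hm
        _ = ((N:ℝ) - 1) * (x ^ m / m + y ^ m / m) := by
            rw [← add_div, ← hkey m]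
            field_simp
            ring
  -- norm bound on the sum of logs
  have htsum : ‖∑ l ∈ range (2*g), -(Complex.log (1 - (r:ℂ) * e (θ l)))‖ ≤
      ((N:ℝ) - 1) * (-Real.log (1 - x) + -Real.log (1 - y)) := by
    rw [← hsum.tsum_eq]
    exact tsum_of_norm_bounded hb hbd
  -- compute the log of the product
  set P : ℝ := ∏ l ∈ range (2*g), ‖1 - (r:ℂ) * e (θ l)‖ with hPdef
  have hP0 : 0 < P := Finset.prod_pos (fun l _ => hfac_pos l)
  have hPlog : Real.log P = (∑ l ∈ range (2*g), Complex.log (1 - (r:ℂ) * e (θ l))).re := by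
    rw [hPdef, Real.log_prod (fun l _ => (hfac_pos l).ne'), Complex.re_sum]
    exact Finset.sum_congr rfl fun l _ => (Complex.log_re _).symm
  have hPbound : |Real.log P| ≤ ((N:ℝ) - 1) * (-Real.log (1 - x) + -Real.log (1 - y)) := by
    rw [hPlog]
    calc |(∑ l ∈ range (2*g), Complex.log (1 - (r:ℂ) * e (θ l))).re|
        ≤ ‖∑ l ∈ range (2*g), Complex.log (1 - (r:ℂ) * e (θ l))‖ :=
          Complex.abs_re_le_norm _
      _ = ‖∑ l ∈ range (2*g), -(Complex.log (1 - (r:ℂ) * e (θ l)))‖ := by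
          rw [← norm_neg, ← Finset.sum_neg_distrib]
      _ ≤ _ := htsum
  -- denominator facts
  have hDy : 0 < 1 - y := by linarith
  have hDx : 0 < 1 - x := by linarith
  have hlogy : -Real.log (1 - y) ≤ 2 * y := neg_log_le hy0 hyhalf
  have hlogx : -Real.log (1 - x) ≤ 2 * x := neg_log_le hx0 hxhalf
  have hlogy0 : Real.log (1 - y) ≤ 0 := Real.log_nonpos hDy.le (by linarith)
  have hlogx0 : Real.log (1 - x) ≤ 0 := Real.log_nonpos hDx.le (by linarith)
  -- main bound
  have hmain : |Real.log (P / ((1 - y) * (1 - x)))| ≤ (N:ℝ) * (2 * x + 2 * y) := by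
    rw [Real.log_div hP0.ne' (by positivity), Real.log_mul hDy.ne' hDx.ne']
    have h1 : |Real.log P - (Real.log (1 - y) + Real.log (1 - x))| ≤
        |Real.log P| + (-Real.log (1 - y)) + (-Real.log (1 - x)) := by
      have := abs_sub (Real.log P) (Real.log (1 - y) + Real.log (1 - x))
      have h2 : |Real.log (1 - y) + Real.log (1 - x)| = -Real.log (1-y) + -Real.log (1-x) := by
        rw [abs_of_nonpos (by linarith)]; ring
      calc |Real.log P - (Real.log (1 - y) + Real.log (1 - x))|
          ≤ |Real.log P| + |Real.log (1 - y) + Real.log (1 - x)| := abs_sub _ _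
        _ = _ := by rw [h2]; ring
    have h3 : ((N:ℝ) - 1) * (-Real.log (1 - x) + -Real.log (1 - y)) ≤
        ((N:ℝ) - 1) * (2 * x + 2 * y) := by
      apply mul_le_mul_of_nonneg_left (by linarith) (by linarith)
    calc |Real.log P - (Real.log (1 - y) + Real.log (1 - x))|
        ≤ |Real.log P| + (-Real.log (1 - y)) + (-Real.log (1 - x)) := h1
      _ ≤ ((N:ℝ) - 1) * (2 * x + 2 * y) + 2 * y + 2 * x := by linarith [hPbound.trans h3]
      _ ≤ (N:ℝ) * (2 * x + 2 * y) := by nlinarith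
  -- final estimate: N*(2x+2y) ≤ 4*N*x ≤ 4*N/√Q ≤ 8N/√Q
  have hxsqrt : x ≤ 1 / Real.sqrt Q := by
    have h1 : x ≤ Q ^ (-(1/2) : ℝ) := hmono _ _ (by linarith)
    have h2 : Q ^ (-(1/2) : ℝ) = 1 / Real.sqrt Q := by
      rw [Real.rpow_neg hQ0.le, Real.sqrt_eq_rpow]
      exact (one_div _).symm
    linarith [h2 ▸ h1]
  have hsqrt0 : 0 < Real.sqrt Q := Real.sqrt_pos.mpr hQ0
  have hfin : (N:ℝ) * (2 * x + 2 * y) ≤ 8 * (N:ℝ) / Real.sqrt Q := by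
    have hxy : 2 * x + 2 * y ≤ 4 * (1 / Real.sqrt Q) := by linarith
    have h5 : (4:ℝ) * N / Real.sqrt Q ≤ 8 * N / Real.sqrt Q :=
      (div_le_div_iff_of_pos_right hsqrt0).mpr (by linarith)
    calc (N:ℝ) * (2 * x + 2 * y) ≤ (N:ℝ) * (4 * (1 / Real.sqrt Q)) :=
          mul_le_mul_of_nonneg_left hxy (by positivity)
      _ = 4 * N / Real.sqrt Q := by ring
      _ ≤ 8 * N / Real.sqrt Q := h5
  -- second RHS term is nonnegative
  have hloglog : 0 ≤ Real.log (Real.log g) := by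
    have h4 : (4:ℝ) ≤ (N:ℝ) * Q := by nlinarith
    have hlog4 : (1:ℝ) ≤ Real.log ((N:ℝ) * Q) := by
      rw [Real.le_log_iff_exp_le (by linarith)]
      calc Real.exp 1 ≤ 2.7182818286 := Real.exp_one_lt_d9.le
        _ ≤ 4 := by norm_num
        _ ≤ (N:ℝ) * Q := h4
    apply Real.log_nonneg
    have := hlog
    rw [one_mul] at this
    linarith
  have hsecond : 0 ≤ 1 * (N:ℝ) * Real.log (Real.log g) / Q ^ k := by positivity
  calc |Real.log (P / ((1 - y) * (1 - x)))| ≤ (N:ℝ) * (2 * x + 2 * y) := hmain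
    _ ≤ 8 * (N:ℝ) / Real.sqrt Q := hfin
    _ ≤ 8 * (N:ℝ) / Real.sqrt Q + 1 * (N:ℝ) * Real.log (Real.log g) / Q ^ k := by linarith
end
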